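/- For all integers n ≥ m ≥ 2 and k ≥ 3: R(P^k_n, P^k_m) ≥ (k−1)n + ⌊(m+1)/2⌋, R(P^k_n, C^k_m) ≥ (k−1)n + ⌊(m+1)/2⌋, and R(C^k_n, C^k_m) ≥ (k−1)n + ⌊(m−1)/2⌋. -/
import Mathlib


open Finset

/-- The `i`-th edge (0-indexed) of a `k`-uniform loose path embedded via `f`. -/
def pathEdge (k : ℕ) {V : Type} [DecidableEq V] (f : ℕ → V) (i : ℕ) : Finset V :=
  (Finset.range k).image fun j => f (i * (k - 1) + j)

/-- The `i`-th edge (0-indexed) of a `k`-uniform loose cycle of length `n` embedded via `f`. -/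
def cycleEdge (k n : ℕ) {V : Type} [DecidableEq V] (f : ℕ → V) (i : ℕ) : Finset V :=
  (Finset.range k).image fun j => f ((i * (k - 1) + j) % (n * (k - 1)))

/-- There is a copy of the loose path `P^k_n` all of whose edges have color `b`. -/
def hasPath (k n : ℕ) {V : Type} [DecidableEq V] (col : Finset V → Bool) (b : Bool) : Prop :=
  ∃ f : ℕ → V, Set.InjOn f (Set.Iio (n * (k - 1) + 1)) ∧
    ∀ i < n, col (pathEdge k f i) = b

/-- There is a copy of the loose cycle `C^k_n` all of whose edges have color `b`. -/
def hasCycle (k n : ℕ) {V : Type} [DecidableEq V] (col : Finset V → Bool) (b : Bool) : Prop :=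
  ∃ f : ℕ → V, Set.InjOn f (Set.Iio (n * (k - 1))) ∧
    ∀ i < n, col (cycleEdge k n f i) = b

/-- Ramsey number `R(P^k_n, P^k_m)` (red = `true`, blue = `false`). -/
noncomputable def ramseyPP (k n m : ℕ) : ℕ :=
  sInf {N | ∀ col : Finset (Fin N) → Bool, hasPath k n col true ∨ hasPath k m col false}

/-- Ramsey number `R(P^k_n, C^k_m)`. -/
noncomputable def ramseyPC (k n m : ℕ) : ℕ :=
  sInf {N | ∀ col : Finset (Fin N) → Bool, hasPath k n col true ∨ hasCycle k m col false}

/-- Ramsey number `R(C^k_n, P^k_m)`. -/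
noncomputable def ramseyCP (k n m : ℕ) : ℕ :=
  sInf {N | ∀ col : Finset (Fin N) → Bool, hasCycle k n col true ∨ hasPath k m col false}

/-- Ramsey number `R(C^k_n, C^k_m)`. -/
noncomputable def ramseyCC (k n m : ℕ) : ℕ :=
  sInf {N | ∀ col : Finset (Fin N) → Bool, hasCycle k n col true ∨ hasCycle k m col false}


open Finset

def Mono (k : ℕ) {V : Type} [DecidableEq V] (col : Finset V → Bool) (b : Bool)
    (S : Finset V) : Prop :=
  ∀ e ⊆ S, e.card = k → col e = b

def RProp (k s t N : ℕ) : Prop :=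
  ∀ (V : Type) (_ : DecidableEq V) (W : Finset V) (col : Finset V → Bool), N ≤ W.card →
    (∃ S ⊆ W, s ≤ S.card ∧ Mono k col true S) ∨ (∃ S ⊆ W, t ≤ S.card ∧ Mono k col false S)

lemma rprop_mono {k s t N N' : ℕ} (h : RProp k s t N) (hNN : N ≤ N') : RProp k s t N' :=
  fun V dV W col hW => h V dV W col (le_trans hNN hW)

lemma rprop_zero (s t : ℕ) : RProp 0 s t (max s t) := by
  intro V dV W col hW
  cases hb : col ∅ with
  | true =>
    left
    obtain ⟨S, hSW, hScard⟩ := exists_subset_card_eq (le_trans (le_max_left s t) hW)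
    refine ⟨S, hSW, hScard.ge, fun e _ hce => ?_⟩
    rw [Finset.card_eq_zero.mp hce, hb]
  | false =>
    right
    obtain ⟨S, hSW, hScard⟩ := exists_subset_card_eq (le_trans (le_max_right s t) hW)
    refine ⟨S, hSW, hScard.ge, fun e _ hce => ?_⟩
    rw [Finset.card_eq_zero.mp hce, hb]

lemma rprop_s_zero (k t : ℕ) : RProp (k+1) 0 t 0 := by
  intro V dV W col _
  refine Or.inl ⟨∅, Finset.empty_subset W, le_refl 0, fun e he hce => absurd hce ?_⟩
  rw [Finset.subset_empty.mp he]
  simp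

lemma rprop_t_zero (k s : ℕ) : RProp (k+1) s 0 0 := by
  intro V dV W col _
  refine Or.inr ⟨∅, Finset.empty_subset W, le_refl 0, fun e he hce => absurd hce ?_⟩
  rw [Finset.subset_empty.mp he]
  simp

lemma ramsey_step {k s t N1 N2 N0 : ℕ} (h1 : RProp (k+1) s (t+1) N1)
    (h2 : RProp (k+1) (s+1) t N2) (h0 : RProp k (max N1 N2) (max N1 N2) N0) :
    RProp (k+1) (s+1) (t+1) (N0+1) := by
  intro V dV W col hW
  have hpos : 0 < W.card := by omega
  obtain ⟨v, hv⟩ := Finset.card_pos.mp hpos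
  set W' := W.erase v with hW'def
  have hW' : N0 ≤ W'.card := by
    rw [hW'def, Finset.card_erase_of_mem hv]; omega
  rcases h0 V dV W' (fun e => col (insert v e)) hW' with
    ⟨S, hSW', hScard, hmono⟩ | ⟨S, hSW', hScard, hmono⟩
  · rcases h1 V dV S col (le_trans (le_max_left N1 N2) hScard) with
      ⟨T, hTS, hTcard, hTmono⟩ | ⟨T, hTS, hTcard, hTmono⟩
    · left
      have hvT : v ∉ T := fun h => (Finset.mem_erase.mp (hSW' (hTS h))).1 rfl
      refine ⟨insert v T, ?_, ?_, ?_⟩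
      · exact Finset.insert_subset hv (hTS.trans (hSW'.trans (Finset.erase_subset v W)))
      · rw [Finset.card_insert_of_notMem hvT]; omega
      · intro e he hce
        by_cases hve : v ∈ e
        · have hsub : e.erase v ⊆ S := fun x hx => by
            have hx' := Finset.mem_erase.mp hx
            have := Finset.mem_insert.mp (he hx'.2)
            exact hTS (this.resolve_left hx'.1)
          have hcard' : (e.erase v).card = k := by
            rw [Finset.card_erase_of_mem hve, hce]; omega
          have := hmono (e.erase v) hsub hcard'
          simp only [] at this
          rwa [Finset.insert_erase hve] at this
        · refine hTmono e (fun x hx => ?_) hce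
          exact (Finset.mem_insert.mp (he hx)).resolve_left (fun h => hve (h ▸ hx))
    · exact Or.inr ⟨T, hTS.trans (hSW'.trans (Finset.erase_subset v W)), hTcard, hTmono⟩
  · rcases h2 V dV S col (le_trans (le_max_right N1 N2) hScard) with
      ⟨T, hTS, hTcard, hTmono⟩ | ⟨T, hTS, hTcard, hTmono⟩
    · exact Or.inl ⟨T, hTS.trans (hSW'.trans (Finset.erase_subset v W)), hTcard, hTmono⟩
    · right
      have hvT : v ∉ T := fun h => (Finset.mem_erase.mp (hSW' (hTS h))).1 rfl
      refine ⟨insert v T, ?_, ?_, ?_⟩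
      · exact Finset.insert_subset hv (hTS.trans (hSW'.trans (Finset.erase_subset v W)))
      · rw [Finset.card_insert_of_notMem hvT]; omega
      · intro e he hce
        by_cases hve : v ∈ e
        · have hsub : e.erase v ⊆ S := fun x hx => by
            have hx' := Finset.mem_erase.mp hx
            have := Finset.mem_insert.mp (he hx'.2)
            exact hTS (this.resolve_left hx'.1)
          have hcard' : (e.erase v).card = k := by
            rw [Finset.card_erase_of_mem hve, hce]; omega
          have := hmono (e.erase v) hsub hcard'
          simp only [] at this
          rwa [Finset.insert_erase hve] at this
        · refine hTmono e (fun x hx => ?_) hce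
          exact (Finset.mem_insert.mp (he hx)).resolve_left (fun h => hve (h ▸ hx))

lemma ramsey_exists : ∀ k s t : ℕ, ∃ N, RProp k s t N := by
  intro k
  induction k with
  | zero => exact fun s t => ⟨max s t, rprop_zero s t⟩
  | succ k ih =>
    suffices h : ∀ p s t : ℕ, s + t ≤ p → ∃ N, RProp (k+1) s t N by
      exact fun s t => h (s+t) s t le_rfl
    intro p
    induction p with
    | zero => intro s t hst
              obtain ⟨rfl, rfl⟩ : s = 0 ∧ t = 0 := by omega
              exact ⟨0, rprop_s_zero k 0⟩
    | succ p ihp =>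
      intro s t hst
      match s, t with
      | 0, t => exact ⟨0, rprop_s_zero k t⟩
      | s+1, 0 => exact ⟨0, rprop_t_zero k (s+1)⟩
      | s+1, t+1 =>
        obtain ⟨N1, h1⟩ := ihp s (t+1) (by omega)
        obtain ⟨N2, h2⟩ := ihp (s+1) t (by omega)
        obtain ⟨N0, h0⟩ := ih (max N1 N2) (max N1 N2)
        exact ⟨N0 + 1, ramsey_step h1 h2 h0⟩

lemma ramsey_fin (k t : ℕ) :
    ∃ N, ∀ col : Finset (Fin N) → Bool,
      ∃ (S : Finset (Fin N)) (b : Bool), t ≤ S.card ∧ Mono k col b S := by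
  obtain ⟨N, hN⟩ := ramsey_exists k t t
  refine ⟨N, fun col => ?_⟩
  have hcard : N ≤ (Finset.univ : Finset (Fin N)).card := by simp
  rcases hN (Fin N) inferInstance Finset.univ col hcard with
    ⟨S, _, hScard, hmono⟩ | ⟨S, _, hScard, hmono⟩
  · exact ⟨S, true, hScard, hmono⟩
  · exact ⟨S, false, hScard, hmono⟩

lemma index_bound {k n i j : ℕ} (hi : i < n) (hj : j < k) (hk : 1 ≤ k) :
    i * (k-1) + j ≤ n * (k-1) + (k-1) := by
  calc i * (k-1) + j ≤ (n-1) * (k-1) + (k-1) + (k-1) := by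
        have h1 : i ≤ n - 1 := by omega
        have := Nat.mul_le_mul_right (k-1) h1
        omega
    _ ≤ n * (k-1) + (k-1) := by
        have : (n-1) * (k-1) + (k-1) = n * (k-1) := by
          have : n - 1 + 1 = n := by omega
          calc (n-1) * (k-1) + (k-1) = (n-1+1) * (k-1) := by ring
            _ = n * (k-1) := by rw [this]
        omega

lemma index_bound' {k n i j : ℕ} (hi : i < n) (hj : j < k) (hk : 1 ≤ k) :
    i * (k-1) + j ≤ n * (k-1) := by
  have := index_bound hi hj hk
  have h1 : i * (k-1) + j ≤ (i+1) * (k-1) + (k-1) := by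
    have : j ≤ k - 1 + (k-1) := by omega
    calc i * (k-1) + j ≤ i * (k-1) + (k-1) + (k-1) := by omega
      _ = (i+1) * (k-1) + (k-1) := by ring
  have h2 : (i+1) * (k-1) ≤ n * (k-1) := Nat.mul_le_mul_right _ (by omega)
  -- i*(k-1)+j ≤ i*(k-1)+(k-1) = (i+1)*(k-1) ≤ n*(k-1), need j ≤ k-1... j < k so j ≤ k-1
  have h3 : i * (k-1) + j ≤ (i+1) * (k-1) := by
    have hj' : j ≤ k - 1 := by omega
    calc i * (k-1) + j ≤ i * (k-1) + (k-1) := by omega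
      _ = (i+1) * (k-1) := by ring
  omega

lemma clique_path {k n N : ℕ} (hk : 3 ≤ k) (hn : 1 ≤ n) {col : Finset (Fin N) → Bool}
    {b : Bool} {S : Finset (Fin N)} (hcard : n * (k-1) + 1 ≤ S.card)
    (hmono : Mono k col b S) : hasPath k n col b := by
  set c := n * (k-1) + 1 with hc
  have hcpos : 0 < c := by omega
  obtain ⟨S', hS'S, hS'c⟩ := exists_subset_card_eq hcard
  set f0 := S'.orderEmbOfFin hS'c with hf0
  set f : ℕ → Fin N := fun x => f0 ⟨x % c, Nat.mod_lt _ hcpos⟩ with hfdef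
  have hfS : ∀ x, f x ∈ S := fun x => hS'S (S'.orderEmbOfFin_mem hS'c _)
  have hinj : Set.InjOn f (Set.Iio c) := by
    intro x hx y hy hxy
    have hx' : x % c = x := Nat.mod_eq_of_lt hx
    have hy' : y % c = y := Nat.mod_eq_of_lt hy
    have := f0.injective hxy
    rw [Fin.mk.injEq] at this
    omega
  refine ⟨f, hinj, fun i hi => ?_⟩
  apply hmono
  · intro v hv
    obtain ⟨j, _, rfl⟩ := Finset.mem_image.mp hv
    exact hfS _
  · rw [pathEdge]
    rw [Finset.card_image_of_injOn, Finset.card_range]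
    intro j hj j' hj' hjj'
    simp only [Finset.coe_range, Set.mem_Iio] at hj hj'
    have h1 : i * (k-1) + j < c := by have := index_bound' hi hj (by omega); omega
    have h2 : i * (k-1) + j' < c := by have := index_bound' hi hj' (by omega); omega
    have := hinj h1 h2 hjj'
    omega

lemma clique_cycle {k n N : ℕ} (hk : 3 ≤ k) (hn : 2 ≤ n) {col : Finset (Fin N) → Bool}
    {b : Bool} {S : Finset (Fin N)} (hcard : n * (k-1) ≤ S.card)
    (hmono : Mono k col b S) : hasCycle k n col b := by
  set c := n * (k-1) with hc
  have hcpos : 2 * (k-1) ≤ c := by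
    rw [hc]; exact Nat.mul_le_mul_right _ hn
  have hcpos' : 0 < c := by omega
  obtain ⟨S', hS'S, hS'c⟩ := exists_subset_card_eq hcard
  set f0 := S'.orderEmbOfFin hS'c with hf0
  set f : ℕ → Fin N := fun x => f0 ⟨x % c, Nat.mod_lt _ hcpos'⟩ with hfdef
  have hfS : ∀ x, f x ∈ S := fun x => hS'S (S'.orderEmbOfFin_mem hS'c _)
  have hinj : Set.InjOn f (Set.Iio c) := by
    intro x hx y hy hxy
    have hx' : x % c = x := Nat.mod_eq_of_lt hx
    have hy' : y % c = y := Nat.mod_eq_of_lt hy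
    have := f0.injective hxy
    rw [Fin.mk.injEq] at this
    omega
  refine ⟨f, hinj, fun i hi => ?_⟩
  apply hmono
  · intro v hv
    obtain ⟨j, _, rfl⟩ := Finset.mem_image.mp hv
    exact hfS _
  · rw [cycleEdge]
    rw [Finset.card_image_of_injOn, Finset.card_range]
    intro j hj j' hj' hjj'
    simp only [Finset.coe_range, Set.mem_Iio] at hj hj'
    have hm1 : (i * (k-1) + j) % c < c := Nat.mod_lt _ hcpos'
    have hm2 : (i * (k-1) + j') % c < c := Nat.mod_lt _ hcpos'
    have heq : (i * (k-1) + j) % c = (i * (k-1) + j') % c :=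
      hinj hm1 hm2 hjj'
    have hb1 : i * (k-1) + j ≤ c := index_bound' hi hj (by omega)
    have hb2 : i * (k-1) + j' ≤ c := index_bound' hi hj' (by omega)
    -- case analysis
    rcases Nat.lt_or_ge (i * (k-1) + j) c with h1 | h1 <;>
      rcases Nat.lt_or_ge (i * (k-1) + j') c with h2 | h2
    · rw [Nat.mod_eq_of_lt h1, Nat.mod_eq_of_lt h2] at heq; omega
    · have he2 : i * (k-1) + j' = c := by omega
      rw [Nat.mod_eq_of_lt h1, he2, Nat.mod_self] at heq
      -- i*(k-1)+j = 0 so i = 0 (since k-1 > 0) and j = 0, then j' = c ≥ 2(k-1) > k-1, contra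
      have hi0 : i * (k-1) = 0 := by omega
      have : i = 0 := by
        rcases Nat.mul_eq_zero.mp hi0 with h | h
        · exact h
        · omega
      omega
    · have he1 : i * (k-1) + j = c := by omega
      rw [Nat.mod_eq_of_lt h2, he1, Nat.mod_self] at heq
      have hi0 : i * (k-1) = 0 := by omega
      have : i = 0 := by
        rcases Nat.mul_eq_zero.mp hi0 with h | h
        · exact h
        · omega
      omega
    · omega

/-- the lower-bound coloring: an edge is red iff all its vertices are below `a`. -/
def colA (N a : ℕ) : Finset (Fin N) → Bool := fun e => decide (∀ v ∈ e, (v : ℕ) < a)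

lemma decomp {k n x : ℕ} (hx : x ≤ n * (k-1)) (hk : 2 ≤ k) (hn : 1 ≤ n) :
    ∃ i < n, ∃ j < k, x = i * (k-1) + j := by
  have hkpos : 0 < k - 1 := by omega
  rcases Nat.lt_or_ge x (n * (k-1)) with h | h
  · refine ⟨x / (k-1), ?_, x % (k-1), ?_, ?_⟩
    · exact Nat.div_lt_of_lt_mul (by rw [Nat.mul_comm] at h; exact h)
    · have := Nat.mod_lt x hkpos; omega
    · rw [Nat.mul_comm]
      exact (Nat.div_add_mod x (k-1)).symm
  · have hx' : x = n * (k-1) := by omega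
    refine ⟨n - 1, by omega, k - 1, by omega, ?_⟩
    rw [hx']
    have h1 : n - 1 + 1 = n := by omega
    calc n * (k-1) = (n - 1 + 1) * (k-1) := by rw [h1]
      _ = (n-1) * (k-1) + (k-1) := by ring

lemma no_red_path {k n N a : ℕ} (hk : 3 ≤ k) (hn : 1 ≤ n) (ha : a ≤ n * (k-1)) :
    ¬ hasPath k n (colA N a) true := by
  rintro ⟨f, hinj, hcol⟩
  have hall : ∀ x < n * (k-1) + 1, ((f x : Fin N) : ℕ) < a := by
    intro x hx
    have hx' : x ≤ n * (k-1) := by omega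
    have hk' : 2 ≤ k := by omega
    obtain ⟨i, hi, j, hj, rfl⟩ := decomp hx' hk' hn
    have h1 := hcol i hi
    have h2 : ∀ v ∈ pathEdge k f i, ((v : Fin N) : ℕ) < a := of_decide_eq_true h1
    exact h2 _ (Finset.mem_image.mpr ⟨j, Finset.mem_range.mpr hj, rfl⟩)
  have hcard : ((Finset.range (n * (k-1) + 1)).image (fun x => ((f x : Fin N) : ℕ))).card
      = n * (k-1) + 1 := by
    rw [Finset.card_image_of_injOn, Finset.card_range]
    intro x hx y hy hxy
    simp only [Finset.coe_range, Set.mem_Iio] at hx hy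
    exact hinj hx hy (Fin.val_injective hxy)
  have hsub : (Finset.range (n * (k-1) + 1)).image (fun x => ((f x : Fin N) : ℕ))
      ⊆ Finset.range a := by
    intro y hy
    obtain ⟨x, hx, rfl⟩ := Finset.mem_image.mp hy
    exact Finset.mem_range.mpr (hall x (Finset.mem_range.mp hx))
  have := Finset.card_le_card hsub
  rw [hcard, Finset.card_range] at this
  omega

lemma no_red_cycle {k n N a : ℕ} (hk : 3 ≤ k) (hn : 1 ≤ n) (ha : a < n * (k-1)) :
    ¬ hasCycle k n (colA N a) true := by
  rintro ⟨f, hinj, hcol⟩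
  have hall : ∀ x < n * (k-1), ((f x : Fin N) : ℕ) < a := by
    intro x hx
    have hk' : 2 ≤ k := by omega
    obtain ⟨i, hi, j, hj, hxe⟩ := decomp (le_of_lt hx) hk' hn
    have h1 := hcol i hi
    have h2 : ∀ v ∈ cycleEdge k n f i, ((v : Fin N) : ℕ) < a := of_decide_eq_true h1
    have hmem : f x ∈ cycleEdge k n f i := by
      refine Finset.mem_image.mpr ⟨j, Finset.mem_range.mpr hj, ?_⟩
      rw [← hxe, Nat.mod_eq_of_lt hx]
    exact h2 _ hmem
  have hcard : ((Finset.range (n * (k-1))).image (fun x => ((f x : Fin N) : ℕ))).card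
      = n * (k-1) := by
    rw [Finset.card_image_of_injOn, Finset.card_range]
    intro x hx y hy hxy
    simp only [Finset.coe_range, Set.mem_Iio] at hx hy
    exact hinj hx hy (Fin.val_injective hxy)
  have hsub : (Finset.range (n * (k-1))).image (fun x => ((f x : Fin N) : ℕ))
      ⊆ Finset.range a := by
    intro y hy
    obtain ⟨x, hx, rfl⟩ := Finset.mem_image.mp hy
    exact Finset.mem_range.mpr (hall x (Finset.mem_range.mp hx))
  have := Finset.card_le_card hsub
  rw [hcard, Finset.card_range] at this
  omega

lemma no_blue_path {k m N a : ℕ} (hk : 3 ≤ k) (hm : 2 ≤ m)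
    (hN : N ≤ a + ((m+1)/2 - 1)) : ¬ hasPath k m (colA N a) false := by
  rintro ⟨f, hinj, hcol⟩
  have hkey : ∀ i, ∃ j, i < m → (j < k ∧ a ≤ ((f (i*(k-1)+j) : Fin N) : ℕ)) := by
    intro i
    by_cases hi : i < m
    · have h1 := hcol i hi
      have h2 : ¬ ∀ v ∈ pathEdge k f i, ((v : Fin N) : ℕ) < a := of_decide_eq_false h1
      push_neg at h2
      obtain ⟨v, hv, hva⟩ := h2
      obtain ⟨j, hj, rfl⟩ := Finset.mem_image.mp hv
      exact ⟨j, fun _ => ⟨Finset.mem_range.mp hj, hva⟩⟩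
    · exact ⟨0, fun h => absurd h hi⟩
  choose jf hjf using hkey
  set B := Finset.univ.filter (fun v : Fin N => a ≤ (v : ℕ)) with hB
  have hBcard : B.card ≤ N - a := by
    have h := Finset.card_le_card_of_injOn (s := B) (t := Finset.Ico a N)
      (fun v => (v : ℕ))
      (fun v hv => Finset.mem_Ico.mpr ⟨(Finset.mem_filter.mp hv).2, v.isLt⟩)
      (fun x _ y _ hxy => Fin.val_injective hxy)
    rwa [Nat.card_Ico] at h
  set G : ℕ → Fin N × Bool := fun i => (f (i*(k-1) + jf i), decide (jf i = 0)) with hG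
  have hjb : ∀ i, i < m → i*(k-1) + jf i < m*(k-1)+1 := fun i hi => by
    have := index_bound' hi (hjf i hi).1 (by omega); omega
  have key : ∀ i i', i < m → i' < m → i < i' → G i = G i' → False := by
    intro i i' him hi'm hii' hGG
    have hg : f (i*(k-1) + jf i) = f (i'*(k-1) + jf i') := congrArg Prod.fst hGG
    have ht : decide (jf i = 0) = decide (jf i' = 0) := congrArg Prod.snd hGG
    have hx := hinj (Set.mem_Iio.mpr (hjb i him)) (Set.mem_Iio.mpr (hjb i' hi'm)) hg
    have hj1 : jf i ≤ k - 1 := by have := (hjf i him).1; omega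
    have h2 : i' * (k-1) ≤ (i+1) * (k-1) := by
      calc i' * (k-1) ≤ i' * (k-1) + jf i' := Nat.le_add_right _ _
        _ = i * (k-1) + jf i := hx.symm
        _ ≤ i * (k-1) + (k-1) := by omega
        _ = (i+1) * (k-1) := by ring
    have h5 : i' ≤ i + 1 := Nat.le_of_mul_le_mul_right h2 (by omega)
    have h6 : i' = i + 1 := by omega
    subst h6
    have hsucc : (i+1) * (k-1) = i * (k-1) + (k-1) := by ring
    have h8 : jf (i+1) = 0 := by omega
    have h9 : jf i ≠ 0 := by omega
    rw [decide_eq_decide] at ht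
    exact h9 (ht.mpr h8)
  have hGmaps : ∀ i ∈ Finset.range m, G i ∈ B ×ˢ (Finset.univ : Finset Bool) := by
    intro i hi
    have him := Finset.mem_range.mp hi
    exact Finset.mem_product.mpr
      ⟨Finset.mem_filter.mpr ⟨Finset.mem_univ _, (hjf i him).2⟩, Finset.mem_univ _⟩
  have hGinj : Set.InjOn G (Finset.range m : Set ℕ) := by
    intro i hi i' hi' hGG
    simp only [Finset.coe_range, Set.mem_Iio] at hi hi'
    rcases Nat.lt_trichotomy i i' with h | h | h
    · exact (key i i' hi hi' h hGG).elim
    · exact h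
    · exact (key i' i hi' hi h hGG.symm).elim
  have hcount := Finset.card_le_card_of_injOn G hGmaps hGinj
  rw [Finset.card_range, Finset.card_product] at hcount
  have hbool : (Finset.univ : Finset Bool).card = 2 := by simp
  rw [hbool] at hcount
  omega

lemma no_blue_cycle {k m N a : ℕ} (hk : 3 ≤ k) (hm : 2 ≤ m)
    (hN : N ≤ a + ((m+1)/2 - 1)) : ¬ hasCycle k m (colA N a) false := by
  rintro ⟨f, hinj, hcol⟩
  set M := m * (k-1) with hM
  have hMpos : 0 < M := by
    have : 2 * 2 ≤ m * (k-1) := Nat.mul_le_mul hm (by omega)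
    omega
  have hkey : ∀ i, ∃ j, i < m →
      (j < k ∧ a ≤ ((f ((i*(k-1)+j) % M) : Fin N) : ℕ)) := by
    intro i
    by_cases hi : i < m
    · have h1 := hcol i hi
      have h2 : ¬ ∀ v ∈ cycleEdge k m f i, ((v : Fin N) : ℕ) < a := of_decide_eq_false h1
      push_neg at h2
      obtain ⟨v, hv, hva⟩ := h2
      obtain ⟨j, hj, rfl⟩ := Finset.mem_image.mp hv
      exact ⟨j, fun _ => ⟨Finset.mem_range.mp hj, hva⟩⟩
    · exact ⟨0, fun h => absurd h hi⟩
  choose jf hjf using hkey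
  set B := Finset.univ.filter (fun v : Fin N => a ≤ (v : ℕ)) with hB
  have hBcard : B.card ≤ N - a := by
    have h := Finset.card_le_card_of_injOn (s := B) (t := Finset.Ico a N)
      (fun v => (v : ℕ))
      (fun v hv => Finset.mem_Ico.mpr ⟨(Finset.mem_filter.mp hv).2, v.isLt⟩)
      (fun x _ y _ hxy => Fin.val_injective hxy)
    rwa [Nat.card_Ico] at h
  set G : ℕ → Fin N × Bool :=
    fun i => (f ((i*(k-1) + jf i) % M), decide ((i*(k-1) + jf i) % M = (i*(k-1)) % M))
    with hG
  have key : ∀ i i', i < m → i' < m → i < i' → G i = G i' → False := by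
    intro i i' him hi'm hii' hGG
    have hg : f ((i*(k-1) + jf i) % M) = f ((i'*(k-1) + jf i') % M) :=
      congrArg Prod.fst hGG
    have ht : decide ((i*(k-1) + jf i) % M = (i*(k-1)) % M)
        = decide ((i'*(k-1) + jf i') % M = (i'*(k-1)) % M) := congrArg Prod.snd hGG
    have he := hinj (Set.mem_Iio.mpr (Nat.mod_lt _ hMpos))
      (Set.mem_Iio.mpr (Nat.mod_lt _ hMpos)) hg
    -- bounds
    have hj1 : jf i ≤ k - 1 := by have := (hjf i him).1; omega
    have hj1' : jf i' ≤ k - 1 := by have := (hjf i' hi'm).1; omega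
    have hsucc : (i+1) * (k-1) = i * (k-1) + (k-1) := by ring
    have hsucc' : (i'+1) * (k-1) = i' * (k-1) + (k-1) := by ring
    have hmul1 : (i+1) * (k-1) ≤ i' * (k-1) := Nat.mul_le_mul_right _ (by omega)
    have hmul2 : (i'+1) * (k-1) ≤ m * (k-1) := Nat.mul_le_mul_right _ (by omega)
    have hxiM : i*(k-1) + jf i < M := by omega
    have hxi'M : i'*(k-1) + jf i' ≤ M := by omega
    have hiM : i*(k-1) < M := by omega
    have hi'M : i'*(k-1) < M := by omega
    rw [Nat.mod_eq_of_lt hxiM] at he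
    rw [Nat.mod_eq_of_lt hxiM, Nat.mod_eq_of_lt hiM, Nat.mod_eq_of_lt hi'M] at ht
    rcases Nat.lt_or_ge (i'*(k-1) + jf i') M with h2 | h2
    · -- no wraparound: same as the path case
      rw [Nat.mod_eq_of_lt h2] at he
      rw [Nat.mod_eq_of_lt h2] at ht
      have h5 : i' ≤ i + 1 := by
        apply Nat.le_of_mul_le_mul_right (c := k-1) _ (show 0 < k-1 by omega)
        omega
      have h6 : i' = i + 1 := by omega
      subst h6
      have h8 : jf (i+1) = 0 := by omega
      have h9 : jf i = k - 1 := by omega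
      rw [decide_eq_decide] at ht
      have := ht.mpr (by omega)
      omega
    · -- wraparound: i' = m-1, the shared vertex is f 0
      have hxi' : i'*(k-1) + jf i' = M := by omega
      rw [hxi', Nat.mod_self] at he
      rw [hxi', Nat.mod_self] at ht
      have hipos : 0 < i' * (k-1) := Nat.mul_pos (by omega) (by omega)
      rw [decide_eq_decide] at ht
      have := ht.mp (by omega)
      omega
  have hGmaps : ∀ i ∈ Finset.range m, G i ∈ B ×ˢ (Finset.univ : Finset Bool) := by
    intro i hi
    have him := Finset.mem_range.mp hi
    exact Finset.mem_product.mpr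
      ⟨Finset.mem_filter.mpr ⟨Finset.mem_univ _, (hjf i him).2⟩, Finset.mem_univ _⟩
  have hGinj : Set.InjOn G (Finset.range m : Set ℕ) := by
    intro i hi i' hi' hGG
    simp only [Finset.coe_range, Set.mem_Iio] at hi hi'
    rcases Nat.lt_trichotomy i i' with h | h | h
    · exact (key i i' hi hi' h hGG).elim
    · exact h
    · exact (key i' i hi' hi h hGG.symm).elim
  have hcount := Finset.card_le_card_of_injOn G hGmaps hGinj
  rw [Finset.card_range, Finset.card_product] at hcount
  have hbool : (Finset.univ : Finset Bool).card = 2 := by simp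
  rw [hbool] at hcount
  omega

theorem ramsey_lower_bounds (n m k : ℕ) (hm : 2 ≤ m) (hnm : m ≤ n) (hk : 3 ≤ k) :
    (k - 1) * n + (m + 1) / 2 ≤ ramseyPP k n m ∧
    (k - 1) * n + (m + 1) / 2 ≤ ramseyPC k n m ∧
    (k - 1) * n + (m - 1) / 2 ≤ ramseyCC k n m := by
  have hcomm : (k - 1) * n = n * (k - 1) := Nat.mul_comm _ _
  have hprod : 2 * 2 ≤ n * (k - 1) := Nat.mul_le_mul (by omega) (by omega)
  have hmn : m * (k-1) ≤ n * (k-1) := Nat.mul_le_mul_right _ hnm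
  obtain ⟨N₀, hN₀⟩ := ramsey_fin k (n * (k-1) + 1)
  have hmemPP : N₀ ∈ {N | ∀ col : Finset (Fin N) → Bool,
      hasPath k n col true ∨ hasPath k m col false} := by
    intro col
    obtain ⟨S, b, hcd, hmono⟩ := hN₀ col
    cases b with
    | true => exact Or.inl (clique_path hk (by omega) hcd hmono)
    | false => exact Or.inr (clique_path hk (by omega) (by omega) hmono)
  have hmemPC : N₀ ∈ {N | ∀ col : Finset (Fin N) → Bool,
      hasPath k n col true ∨ hasCycle k m col false} := by
    intro col
    obtain ⟨S, b, hcd, hmono⟩ := hN₀ col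
    cases b with
    | true => exact Or.inl (clique_path hk (by omega) hcd hmono)
    | false => exact Or.inr (clique_cycle hk hm (by omega) hmono)
  have hmemCC : N₀ ∈ {N | ∀ col : Finset (Fin N) → Bool,
      hasCycle k n col true ∨ hasCycle k m col false} := by
    intro col
    obtain ⟨S, b, hcd, hmono⟩ := hN₀ col
    cases b with
    | true => exact Or.inl (clique_cycle hk (by omega) (by omega) hmono)
    | false => exact Or.inr (clique_cycle hk hm (by omega) hmono)
  refine ⟨?_, ?_, ?_⟩
  · by_contra h
    push_neg at h
    rw [ramseyPP] at h
    have hmem := Nat.sInf_mem (⟨N₀, hmemPP⟩ : Set.Nonempty _)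
    set N := sInf {N | ∀ col : Finset (Fin N) → Bool,
      hasPath k n col true ∨ hasPath k m col false} with hNdef
    rcases hmem (colA N (n * (k-1))) with hr | hb
    · exact no_red_path hk (by omega) le_rfl hr
    · exact no_blue_path hk hm (by omega) hb
  · by_contra h
    push_neg at h
    rw [ramseyPC] at h
    have hmem := Nat.sInf_mem (⟨N₀, hmemPC⟩ : Set.Nonempty _)
    set N := sInf {N | ∀ col : Finset (Fin N) → Bool,
      hasPath k n col true ∨ hasCycle k m col false} with hNdef
    rcases hmem (colA N (n * (k-1))) with hr | hb
    · exact no_red_path hk (by omega) le_rfl hr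
    · exact no_blue_cycle hk hm (by omega) hb
  · by_contra h
    push_neg at h
    rw [ramseyCC] at h
    have hmem := Nat.sInf_mem (⟨N₀, hmemCC⟩ : Set.Nonempty _)
    set N := sInf {N | ∀ col : Finset (Fin N) → Bool,
      hasCycle k n col true ∨ hasCycle k m col false} with hNdef
    rcases hmem (colA N (n * (k-1) - 1)) with hr | hb
    · exact no_red_cycle hk (by omega) (by omega) hr
    · exact no_blue_cycle hk hm (by omega) hb
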